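/- (Fundamental theorem of the power quantum calculus) Let f : ℝ → ℝ be continuous at 0 and n,q-differentiable on I (in particular differentiable at 0), and let a, b ∈ I. Suppose the series defining ∫_0^a D_{n,q} f(t) d_{n,q}t and ∫_0^b D_{n,q} f(t) d_{n,q}t converge. Then ∫_a^b D_{n,q} f(t) d_{n,q}t = f(b) − f(a). -/

import Mathlib

open Filter
open scoped Classical

noncomputable section

/-- `[k]_n = ∑_{i=0}^{k-1} n^i` (so `[0]_n = 0`). -/
def nbr (n k : ℕ) : ℕ := ∑ i ∈ Finset.range k, n ^ i

/-- `h(t) = q·t^n`. -/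
def hfun (q : ℝ) (n : ℕ) (t : ℝ) : ℝ := q * t ^ n

/-- `θ = q^(1/(1-n))` (meaningful for `n ≥ 3`). -/
def theta (q : ℝ) (n : ℕ) : ℝ := q ^ ((1 : ℝ) / (1 - (n : ℝ)))

/-- `S = {0}` if `n = 1`, and `S = {-θ, 0, θ}` if `n ≥ 3`. -/
def Sset (q : ℝ) (n : ℕ) : Set ℝ :=
  if n = 1 then {0} else {-theta q n, 0, theta q n}

/-- `I = (-θ, θ)` (all of `ℝ` when `n = 1`). -/
def Iset (q : ℝ) (n : ℕ) : Set ℝ :=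
  if n = 1 then Set.univ else Set.Ioo (-theta q n) (theta q n)

/-- The `n,q`-power difference operator `D_{n,q}`. -/
def Dnq (q : ℝ) (n : ℕ) (f : ℝ → ℝ) (t : ℝ) : ℝ :=
  if t ∈ Sset q n then deriv f t
  else (f (q * t ^ n) - f t) / (q * t ^ n - t)

/-- The `k`-th summand of the series defining the `n,q`-integral `∫_0^x f(t) d_{n,q}t`. -/
def nqSeq (q : ℝ) (n : ℕ) (f : ℝ → ℝ) (x : ℝ) (k : ℕ) : ℝ :=
  q ^ nbr n k * x ^ n ^ k * (q ^ n ^ k * x ^ (n ^ k * (n - 1)) - 1) *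
    f (q ^ nbr n k * x ^ n ^ k)

/-- `∫_0^x f(t) d_{n,q}t`. -/
def nqInt0 (q : ℝ) (n : ℕ) (f : ℝ → ℝ) (x : ℝ) : ℝ := -∑' k : ℕ, nqSeq q n f x k

/-- `∫_a^b f(t) d_{n,q}t = ∫_0^b f(t) d_{n,q}t − ∫_0^a f(t) d_{n,q}t`. -/
def nqInt (q : ℝ) (n : ℕ) (f : ℝ → ℝ) (a b : ℝ) : ℝ :=
  nqInt0 q n f b - nqInt0 q n f a

/-- The orbit `[s]_{n,q} = {q^{[k]_n}·s^{n^k} : k ∈ ℕ}`. -/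
def nqOrbit (q : ℝ) (n : ℕ) (s : ℝ) : Set ℝ :=
  Set.range fun k : ℕ => q ^ nbr n k * s ^ n ^ k

/-- The `n,q`-interval `[a,b]_{n,q}`. -/
def nqInterval (q : ℝ) (n : ℕ) (a b : ℝ) : Set ℝ :=
  nqOrbit q n a ∪ nqOrbit q n b ∪ {0}

lemma nbr_succ (n k : ℕ) : nbr n (k + 1) = n * nbr n k + 1 := by
  simp only [nbr, Finset.sum_range_succ']
  rw [Finset.mul_sum]
  simp [pow_succ, mul_comm]

lemma nbr_mul (n : ℕ) (hn : 1 ≤ n) (k : ℕ) : (n - 1) * nbr n k + 1 = n ^ k := by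
  obtain ⟨m, rfl⟩ : ∃ m, n = m + 1 := ⟨n - 1, by omega⟩
  induction k with
  | zero => simp [nbr]
  | succ k IH =>
      rw [nbr_succ, pow_succ, ← IH]
      simp only [Nat.add_sub_cancel]
      ring

lemma theta_pos {q : ℝ} (hq0 : 0 < q) (n : ℕ) : 0 < theta q n :=
  Real.rpow_pos_of_pos hq0 _

lemma theta_pow {q : ℝ} (hq0 : 0 < q) {n : ℕ} (hn : n ≠ 1) (hn0 : n ≠ 0) :
    theta q n ^ (n - 1) = q⁻¹ := by
  have h1 : ((n : ℝ) - 1) ≠ 0 := by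
    have : (1 : ℝ) < (n : ℝ) := by exact_mod_cast (by omega : 1 < n)
    linarith
  rw [theta, ← Real.rpow_natCast (q ^ ((1 : ℝ) / (1 - (n : ℝ)))) (n - 1),
    ← Real.rpow_mul hq0.le]
  have hcast : ((n - 1 : ℕ) : ℝ) = (n : ℝ) - 1 := by
    push_cast [Nat.cast_sub (by omega : 1 ≤ n)]; ring
  rw [hcast]
  have h2 : (1 : ℝ) - (n : ℝ) ≠ 0 := by
    intro h; apply h1; linarith
  have : (1 : ℝ) / (1 - (n : ℝ)) * ((n : ℝ) - 1) = -1 := by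
    field_simp
    ring
  rw [this, Real.rpow_neg_one]

/-- `S` is exactly the fixed point set of `t ↦ q t^n`. -/
lemma mem_Sset_iff_fixed {q : ℝ} (hq0 : 0 < q) (hq1 : q < 1) {n : ℕ} (hn : Odd n)
    (t : ℝ) : t ∈ Sset q n ↔ q * t ^ n = t := by
  have hn1 : 1 ≤ n := hn.pos
  by_cases h1 : n = 1
  · subst h1
    simp only [Sset, if_pos rfl, Set.mem_singleton_iff, pow_one]
    constructor
    · rintro rfl; ring
    · intro h
      by_contra ht
      have := mul_right_cancel₀ ht (by linarith [h] : q * t = 1 * t)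
      linarith
  · have hn3 : 3 ≤ n := by
      rcases hn with ⟨m, rfl⟩; omega
    have hne : Even (n - 1) := by
      rcases hn with ⟨m, rfl⟩
      exact ⟨m, by omega⟩
    have hθ := theta_pos hq0 n
    have hθpow := theta_pow hq0 h1 (by omega)
    simp only [Sset, if_neg h1, Set.mem_insert_iff, Set.mem_singleton_iff]
    have hkey : q * theta q n ^ n = theta q n := by
      have hsplit : theta q n ^ n = theta q n ^ (n - 1) * theta q n := by
        rw [← pow_succ]; congr 1; omega
      rw [hsplit, hθpow]
      field_simp
    constructor
    · rintro (rfl | rfl | rfl)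
      · rw [hn.neg_pow, mul_neg, hkey]
      · simp [zero_pow (by omega : n ≠ 0)]
      · exact hkey
    · intro h
      by_cases ht : t = 0
      · right; left; exact ht
      · have hpow : t ^ (n - 1) = q⁻¹ := by
          have hne' : t ^ n = t ^ (n - 1) * t := by
            rw [← pow_succ]; congr 1; omega
          have h2 : q * t ^ (n - 1) * t = 1 * t := by
            rw [one_mul, mul_assoc, ← hne', h]
          have h3 : q * t ^ (n - 1) = 1 := mul_right_cancel₀ ht h2
          rw [inv_eq_one_div, eq_div_iff hq0.ne']
          linear_combination h3
        have habs : |t| ^ (n - 1) = theta q n ^ (n - 1) := by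
          rw [hne.pow_abs, hpow, hθpow]
        have : |t| = theta q n :=
          (pow_left_inj₀ (abs_nonneg t) hθ.le (by omega : n - 1 ≠ 0)).mp habs
        rcases abs_eq hθ.le |>.mp this with h' | h'
        · right; right; exact h'
        · left; exact h'

/-- The orbit point `t k = q^{[k]_n} x^{n^k}` and the basic step identity. -/
lemma orbit_step {q : ℝ} {n : ℕ} (x : ℝ) (k : ℕ) :
    q * (q ^ nbr n k * x ^ n ^ k) ^ n = q ^ nbr n (k + 1) * x ^ n ^ (k + 1) := by
  have e : n ^ (k + 1) = n ^ k * n := pow_succ n k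
  rw [nbr_succ, e, mul_pow, ← pow_mul, ← pow_mul, pow_add, pow_one,
    mul_comm (nbr n k) n]
  ring

/-- Generic step: `u·c·D_{n,q}f(u) = f(q u^n) − f(u)` when `u·c = q u^n − u`. -/
lemma Dnq_mul {q : ℝ} (hq0 : 0 < q) (hq1 : q < 1) {n : ℕ} (hn : Odd n)
    (f : ℝ → ℝ) (u c : ℝ) (hc : u * c = q * u ^ n - u) :
    u * c * Dnq q n f u = f (q * u ^ n) - f u := by
  by_cases hS : u ∈ Sset q n
  · have hfix : q * u ^ n = u := (mem_Sset_iff_fixed hq0 hq1 hn u).mp hS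
    have hz : u * c = 0 := by rw [hc, hfix]; ring
    rw [hz, zero_mul, hfix, sub_self]
  · have hfix : q * u ^ n - u ≠ 0 := fun h =>
      hS ((mem_Sset_iff_fixed hq0 hq1 hn u).mpr (by linarith [sub_eq_zero.mp h]))
    rw [Dnq, if_neg hS, hc, mul_comm, div_mul_cancel₀ _ hfix]

/-- The summand of the series equals a telescoping difference. -/
lemma nqSeq_telescope {q : ℝ} (hq0 : 0 < q) (hq1 : q < 1) {n : ℕ} (hn : Odd n)
    (f : ℝ → ℝ) (x : ℝ) (k : ℕ) :
    nqSeq q n (Dnq q n f) x k =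
      f (q ^ nbr n (k + 1) * x ^ n ^ (k + 1)) - f (q ^ nbr n k * x ^ n ^ k) := by
  have hn1 : 1 ≤ n := hn.pos
  have key : (q ^ nbr n k * x ^ n ^ k) * (q ^ n ^ k * x ^ (n ^ k * (n - 1)) - 1) =
      q * (q ^ nbr n k * x ^ n ^ k) ^ n - q ^ nbr n k * x ^ n ^ k := by
    have h1 : q * (q ^ nbr n k * x ^ n ^ k) ^ n =
        q ^ nbr n k * x ^ n ^ k * (q ^ n ^ k * x ^ (n ^ k * (n - 1))) := by
      rw [mul_pow, ← pow_mul, ← pow_mul]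
      have e1 : nbr n k * n + 1 = nbr n k + n ^ k := by
        rw [mul_comm]
        have hA : nbr n (k + 1) = n * nbr n k + 1 := nbr_succ n k
        have hB : nbr n (k + 1) = nbr n k + n ^ k := by
          simp [nbr, Finset.sum_range_succ]
        omega
      have e2 : n ^ k * n = n ^ k + n ^ k * (n - 1) := by
        have : n ^ k * n = n ^ k * (1 + (n - 1)) := by congr 1; omega
        rw [this]; ring
      calc q * (q ^ (nbr n k * n) * x ^ (n ^ k * n))
          = q ^ (nbr n k * n + 1) * x ^ (n ^ k * n) := by rw [pow_succ]; ring
        _ = q ^ (nbr n k + n ^ k) * x ^ (n ^ k + n ^ k * (n - 1)) := by rw [e1, e2]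
        _ = q ^ nbr n k * x ^ n ^ k * (q ^ n ^ k * x ^ (n ^ k * (n - 1))) := by
            rw [pow_add, pow_add]; ring
    rw [h1]; ring
  rw [nqSeq, Dnq_mul hq0 hq1 hn f _ _ key, orbit_step x k]

/-- The orbit tends to `0` for `x ∈ I`. -/
lemma orbit_tendsto {q : ℝ} (hq0 : 0 < q) (hq1 : q < 1) {n : ℕ} (hn : Odd n)
    {x : ℝ} (hx : x ∈ Iset q n) :
    Tendsto (fun k : ℕ => q ^ nbr n k * x ^ n ^ k) atTop (nhds 0) := by
  have hn1 : 1 ≤ n := hn.pos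
  set r : ℝ := q * |x| ^ (n - 1) with hr
  have hr0 : 0 ≤ r := mul_nonneg hq0.le (pow_nonneg (abs_nonneg x) _)
  have hr1 : r < 1 := by
    by_cases h1 : n = 1
    · subst h1; simpa [hr] using hq1
    · have hn3 : 3 ≤ n := by rcases hn with ⟨m, rfl⟩; omega
      have hθ := theta_pos hq0 n
      have hθpow := theta_pow hq0 h1 (by omega)
      have hxθ : |x| < theta q n := by
        simp only [Iset, if_neg h1, Set.mem_Ioo] at hx
        rw [abs_lt]; exact hx
      have : |x| ^ (n - 1) < theta q n ^ (n - 1) :=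
        pow_lt_pow_left₀ hxθ (abs_nonneg x) (by omega)
      calc r < q * theta q n ^ (n - 1) := by
              exact mul_lt_mul_of_pos_left this hq0
        _ = 1 := by rw [hθpow]; field_simp
  have hbound : ∀ k, |q ^ nbr n k * x ^ n ^ k| ≤ r ^ k * |x| := by
    intro k
    induction k with
    | zero => simp [nbr]
    | succ k IH =>
        have hle1 : r ^ k * |x| ≤ |x| := by
          calc r ^ k * |x| ≤ 1 * |x| :=
                mul_le_mul_of_nonneg_right (pow_le_one₀ hr0 hr1.le) (abs_nonneg x)
            _ = |x| := one_mul _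
        have habs : |q ^ nbr n (k + 1) * x ^ n ^ (k + 1)| =
            q * |q ^ nbr n k * x ^ n ^ k| ^ n := by
          rw [← orbit_step, abs_mul, abs_pow, abs_of_pos hq0]
        rw [habs]
        have hsplit : |q ^ nbr n k * x ^ n ^ k| ^ n =
            |q ^ nbr n k * x ^ n ^ k| ^ (n - 1) * |q ^ nbr n k * x ^ n ^ k| := by
          rw [← pow_succ]; congr 1; omega
        rw [hsplit]
        have h1 : |q ^ nbr n k * x ^ n ^ k| ^ (n - 1) ≤ |x| ^ (n - 1) :=
          pow_le_pow_left₀ (abs_nonneg _) (le_trans IH hle1) _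
        calc q * (|q ^ nbr n k * x ^ n ^ k| ^ (n - 1) * |q ^ nbr n k * x ^ n ^ k|)
            ≤ q * (|x| ^ (n - 1) * (r ^ k * |x|)) := by
              apply mul_le_mul_of_nonneg_left _ hq0.le
              exact mul_le_mul h1 IH (abs_nonneg _)
                (pow_nonneg (abs_nonneg x) _)
          _ = r ^ (k + 1) * |x| := by rw [hr]; ring
  have hg : Tendsto (fun k : ℕ => r ^ k * |x|) atTop (nhds 0) := by
    have := (tendsto_pow_atTop_nhds_zero_of_lt_one hr0 hr1).mul_const |x|
    simpa using this
  exact squeeze_zero_norm hbound hg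

lemma nqInt0_eq {q : ℝ} (hq0 : 0 < q) (hq1 : q < 1) {n : ℕ} (hn : Odd n)
    (f : ℝ → ℝ) (hf0 : ContinuousAt f 0)
    {x : ℝ} (hx : x ∈ Iset q n) (hs : Summable (nqSeq q n (Dnq q n f) x)) :
    nqInt0 q n (Dnq q n f) x = f x - f 0 := by
  have hn1 : 1 ≤ n := hn.pos
  set t : ℕ → ℝ := fun k => q ^ nbr n k * x ^ n ^ k with ht
  have ht0 : t 0 = x := by simp [ht, nbr]
  have hpart : ∀ N, ∑ k ∈ Finset.range N, nqSeq q n (Dnq q n f) x k = f (t N) - f x := by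
    intro N
    have : ∀ k, nqSeq q n (Dnq q n f) x k = f (t (k + 1)) - f (t k) := fun k =>
      nqSeq_telescope hq0 hq1 hn f x k
    rw [Finset.sum_congr rfl (fun k _ => this k), Finset.sum_range_sub (fun k => f (t k)), ht0]
  have htend : Tendsto t atTop (nhds 0) := orbit_tendsto hq0 hq1 hn hx
  have hft : Tendsto (fun N => f (t N) - f x) atTop (nhds (f 0 - f x)) :=
    (hf0.tendsto.comp htend).sub_const (f x)
  have hsum : Tendsto (fun N => ∑ k ∈ Finset.range N, nqSeq q n (Dnq q n f) x k)
      atTop (nhds (∑' k, nqSeq q n (Dnq q n f) x k)) :=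
    hs.hasSum.tendsto_sum_nat
  have : (∑' k, nqSeq q n (Dnq q n f) x k) = f 0 - f x := by
    apply tendsto_nhds_unique _ hft
    simpa only [hpart] using hsum
  rw [nqInt0, this]; ring

theorem stmt9 (q : ℝ) (hq0 : 0 < q) (hq1 : q < 1) (n : ℕ) (hn : Odd n)
    (f : ℝ → ℝ) (hf0 : ContinuousAt f 0) (hfd : DifferentiableAt ℝ f 0)
    (a b : ℝ) (ha : a ∈ Iset q n) (hb : b ∈ Iset q n)
    (hsa : Summable (nqSeq q n (Dnq q n f) a))
    (hsb : Summable (nqSeq q n (Dnq q n f) b)) :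
    nqInt q n (Dnq q n f) a b = f b - f a := by
  rw [nqInt, nqInt0_eq hq0 hq1 hn f hf0 ha hsa, nqInt0_eq hq0 hq1 hn f hf0 hb hsb]
  ring
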